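/- For every x ∈ (0, ∞) one has lim_{α ↓ 0} f_α(x)/α = x⁻¹ e^{−x}. -/

import Mathlib

open MeasureTheory Set Filter
open Real (arctan exp)

/-- `F(x+iy) = ∫₀^∞ t e^{-t}/((x-t)² + y²) dt`. -/
noncomputable def Fint (x y : ℝ) : ℝ :=
  ∫ t in Set.Ioi (0:ℝ), t * Real.exp (-t) / ((x - t)^2 + y^2)

/-- `H_α(z) = z + α + α ∫₀^∞ t e^{-t}/(z-t) dt`. -/
noncomputable def Hfun (α : ℝ) (z : ℂ) : ℂ :=
  z + (α : ℂ) + (α : ℂ) * ∫ t in Set.Ioi (0:ℝ), ((t * Real.exp (-t) : ℝ) : ℂ) / (z - (t : ℂ))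


lemma FG_phi_le_one {t : ℝ} (ht : 0 ≤ t) : t * Real.exp (-t) ≤ 1 := by
  have h : t ≤ Real.exp t := by nlinarith [Real.add_one_le_exp t]
  calc t * Real.exp (-t) ≤ Real.exp t * Real.exp (-t) :=
        mul_le_mul_of_nonneg_right h (Real.exp_nonneg _)
    _ = 1 := by rw [← Real.exp_add]; simp

lemma FG_phi_le_exp_half {t : ℝ} (ht : 0 ≤ t) : t * Real.exp (-t) ≤ Real.exp (-(t/2)) := by
  have h2 := Real.add_one_le_exp (t/4)
  have h3 : Real.exp (t/4) * Real.exp (t/4) = Real.exp (t/2) := by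
    rw [← Real.exp_add]; ring_nf
  have h4 : (t/4+1)*(t/4+1) ≤ Real.exp (t/4) * Real.exp (t/4) :=
    mul_le_mul h2 h2 (by linarith) (Real.exp_nonneg _)
  have h : t ≤ Real.exp (t/2) := by nlinarith [sq_nonneg (t/4 - 1)]
  calc t * Real.exp (-t) ≤ Real.exp (t/2) * Real.exp (-t) :=
        mul_le_mul_of_nonneg_right h (Real.exp_nonneg _)
    _ = Real.exp (-(t/2)) := by rw [← Real.exp_add]; ring_nf

lemma FG_integrableOn_phi : IntegrableOn (fun t : ℝ => t * Real.exp (-t)) (Ioi 0) := by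
  have hb : IntegrableOn (fun t : ℝ => Real.exp (-(1/2 : ℝ) * t)) (Ioi (0:ℝ)) :=
    exp_neg_integrableOn_Ioi 0 (by norm_num)
  refine hb.mono' ?_ ?_
  · exact (continuous_id.mul (Real.continuous_exp.comp continuous_neg)).aestronglyMeasurable
  · filter_upwards [ae_restrict_mem measurableSet_Ioi] with t ht
    have h0 : (0:ℝ) ≤ t := le_of_lt ht
    rw [Real.norm_eq_abs, abs_of_nonneg (by positivity)]
    calc t * Real.exp (-t) ≤ Real.exp (-(t/2)) := FG_phi_le_exp_half h0
      _ = Real.exp (-(1/2:ℝ) * t) := by ring_nf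

lemma FG_integral_phi : ∫ t in Ioi (0:ℝ), t * Real.exp (-t) = 1 := by
  have h := Real.Gamma_eq_integral (by norm_num : (0:ℝ) < 2)
  rw [← Real.Gamma_two, h]
  refine setIntegral_congr_fun measurableSet_Ioi (fun x hx => ?_)
  rw [show (2:ℝ) - 1 = 1 by norm_num, Real.rpow_one, mul_comm]


lemma FG_arctan_le_self {y : ℝ} (hy : 0 < y) : arctan y ≤ y := by
  have h1 : arctan y < Real.pi/2 := Real.arctan_lt_pi_div_two y
  have h2 : 0 < arctan y := by
    rw [← Real.arctan_zero]; exact Real.arctan_strictMono hy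
  have := Real.lt_tan h2 h1
  rw [Real.tan_arctan] at this
  linarith

lemma FG_pi_sub_arctan {y : ℝ} (hy : 0 < y) : Real.pi/2 - arctan y ≤ 1/y := by
  rw [← Real.arctan_inv_of_pos hy]
  have := FG_arctan_le_self (y := y⁻¹) (by positivity)
  rw [one_div]; exact this

-- Lipschitz-type bound for φ(t) = t e^{-t} on [0, ∞), constant 2.
lemma FG_phi_lip {a b : ℝ} (ha : 0 ≤ a) (hb : 0 ≤ b) :
    |a * Real.exp (-a) - b * Real.exp (-b)| ≤ 2 * |a - b| := by
  have key : ∀ x ∈ Ici (0:ℝ), HasDerivWithinAt (fun t : ℝ => t * Real.exp (-t))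
      ((1 - x) * Real.exp (-x)) (Ici 0) x := by
    intro x _
    have h1 : HasDerivAt (fun t : ℝ => t * Real.exp (-t))
        (1 * Real.exp (-x) + x * (Real.exp (-x) * (-1))) x := by
      exact (hasDerivAt_id x).mul (((Real.hasDerivAt_exp (-x)).comp x ((hasDerivAt_id x).neg)))
    have h2 : (1:ℝ) * Real.exp (-x) + x * (Real.exp (-x) * (-1)) = (1 - x) * Real.exp (-x) := by
      ring
    rw [h2] at h1
    exact h1.hasDerivWithinAt
  have bound : ∀ x ∈ Ici (0:ℝ), ‖(1 - x) * Real.exp (-x)‖ ≤ 2 := by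
    intro x hx
    have hx0 : (0:ℝ) ≤ x := hx
    rw [Real.norm_eq_abs, abs_mul, abs_of_pos (Real.exp_pos _)]
    have h1 : |1 - x| ≤ 1 + x := by rw [abs_le]; constructor <;> linarith
    have h2 : Real.exp (-x) ≤ 1 := Real.exp_le_one_iff.mpr (by linarith)
    have h3 : x * Real.exp (-x) ≤ 1 := FG_phi_le_one hx0
    nlinarith [Real.exp_pos (-x), abs_nonneg (1 - x)]
  have := Convex.norm_image_sub_le_of_norm_hasDerivWithin_le key bound (convex_Ici 0) hb ha
  simpa [Real.norm_eq_abs] using this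


lemma FG_pk_eq {u w : ℝ} (hw : 0 < w) (t : ℝ) :
    w / ((u - t)^2 + w^2) = (1/w) * (1 + ((t - u)/w)^2)⁻¹ := by
  have hD : (0:ℝ) < (u - t)^2 + w^2 := by positivity
  rw [eq_comm]
  field_simp
  ring

lemma FG_pk_integrable {u w : ℝ} (hw : 0 < w) :
    Integrable (fun t : ℝ => w / ((u - t)^2 + w^2)) := by
  have h1 : Integrable (fun x : ℝ => (1 + (x/w)^2)⁻¹) :=
    integrable_inv_one_add_sq.comp_div hw.ne'
  have h2 : Integrable (fun t : ℝ => (1 + ((t - u)/w)^2)⁻¹) := h1.comp_sub_right u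
  have h3 := h2.const_mul (1/w)
  refine h3.congr ?_
  exact Eventually.of_forall fun t => (FG_pk_eq hw t).symm

lemma FG_pk_integral_univ {u w : ℝ} (hw : 0 < w) :
    ∫ t : ℝ, w / ((u - t)^2 + w^2) = Real.pi := by
  have h0 : ∀ t : ℝ, w / ((u - t)^2 + w^2) = (1/w) * (1 + ((t - u)/w)^2)⁻¹ := FG_pk_eq hw
  simp_rw [h0]
  rw [integral_const_mul]
  rw [show (fun t : ℝ => (1 + ((t - u)/w)^2)⁻¹) = (fun t : ℝ => (fun x => (1 + (x/w)^2)⁻¹) (t - u)) from rfl]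
  rw [integral_sub_right_eq_self (fun x : ℝ => (1 + (x/w)^2)⁻¹) u]
  rw [Measure.integral_comp_div (fun x : ℝ => (1 + x^2)⁻¹) w]
  rw [integral_univ_inv_one_add_sq]
  rw [abs_of_pos hw, smul_eq_mul]
  field_simp

lemma FG_pk_window {u w : ℝ} (hw : 0 < w) (δ : ℝ) :
    ∫ t in (u - δ)..(u + δ), w / ((u - t)^2 + w^2) = 2 * arctan (δ / w) := by
  have h0 : ∀ t : ℝ, w / ((u - t)^2 + w^2) = (1/w) * (1 + ((t - u)/w)^2)⁻¹ := FG_pk_eq hw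
  simp_rw [h0]
  rw [intervalIntegral.integral_const_mul]
  rw [show (fun t : ℝ => (1 + ((t - u)/w)^2)⁻¹) = (fun t : ℝ => (fun x => (1 + (x/w)^2)⁻¹) (t - u)) from rfl]
  rw [intervalIntegral.integral_comp_sub_right (fun x : ℝ => (1 + (x/w)^2)⁻¹) u]
  rw [intervalIntegral.integral_comp_div (fun x : ℝ => (1 + x^2)⁻¹) hw.ne']
  rw [integral_inv_one_add_sq]
  rw [smul_eq_mul]
  have : u - δ - u = -δ := by ring
  rw [this, show u + δ - u = δ by ring, neg_div, Real.arctan_neg]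
  field_simp
  ring


lemma FG_phi_nonneg {t : ℝ} (ht : 0 ≤ t) : 0 ≤ t * Real.exp (-t) := by positivity

lemma FG_arctan_pos {y : ℝ} (hy : 0 < y) : 0 < arctan y := by
  rw [← Real.arctan_zero]; exact Real.arctan_strictMono hy

lemma FG_wFint_eq {u w : ℝ} (hw : 0 < w) :
    w * Fint u w = ∫ t in Ioi (0:ℝ), (t * Real.exp (-t)) * (w / ((u - t)^2 + w^2)) := by
  rw [Fint, ← integral_const_mul]
  refine setIntegral_congr_fun measurableSet_Ioi (fun t _ => ?_)
  have hD : (0:ℝ) < (u - t)^2 + w^2 := by positivity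
  field_simp

lemma FG_phiP_integrableOn {u w : ℝ} (hw : 0 < w) :
    IntegrableOn (fun t : ℝ => (t * Real.exp (-t)) * (w / ((u - t)^2 + w^2))) (Ioi 0) := by
  refine ((FG_pk_integrable (u := u) hw).integrableOn).mono' ?_ ?_
  · apply Continuous.aestronglyMeasurable
    apply Continuous.mul
    · exact continuous_id.mul (Real.continuous_exp.comp continuous_neg)
    · apply Continuous.div continuous_const
      · continuity
      · intro t; positivity
  · filter_upwards [ae_restrict_mem measurableSet_Ioi] with t ht
    have ht0 : (0:ℝ) ≤ t := le_of_lt ht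
    have hD : (0:ℝ) < (u - t)^2 + w^2 := by positivity
    have hP0 : 0 ≤ w / ((u - t)^2 + w^2) := by positivity
    simp only [Real.norm_eq_abs]
    rw [abs_of_nonneg (mul_nonneg (FG_phi_nonneg ht0) hP0)]
    exact mul_le_of_le_one_left hP0 (FG_phi_le_one ht0)

/-- Main Poisson estimate: `|w·Fint u w − π·x e^{-x}| ≤ 2π(δ+|u−x|) + 4w/δ`. -/
lemma FG_K_bound {u w δ x : ℝ} (hw : 0 < w) (hδ : 0 < δ) (hδu : δ ≤ u) (hx : 0 ≤ x) :
    |w * Fint u w - Real.pi * (x * Real.exp (-x))| ≤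
      2 * Real.pi * (δ + |u - x|) + 4 * w / δ := by
  set φ := fun t : ℝ => t * Real.exp (-t) with hφ
  set P := fun t : ℝ => w / ((u - t)^2 + w^2) with hPdef
  have hPK : Integrable P := FG_pk_integrable hw
  have hP0 : ∀ t, 0 ≤ P t := fun t => by simp only [hPdef]; positivity
  have hInt : IntegrableOn (fun t => φ t * P t) (Ioi 0) := FG_phiP_integrableOn hw
  have hwF : w * Fint u w = ∫ t in Ioi (0:ℝ), φ t * P t := FG_wFint_eq hw
  set win : Set ℝ := Ioc (u - δ) (u + δ) with hwin
  have hwsub : win ⊆ Ioi (0:ℝ) := by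
    intro t ht
    have : u - δ < t := ht.1
    have : (0:ℝ) ≤ u - δ := by linarith
    exact lt_of_le_of_lt this ht.1
  -- window kernel integral
  have hA : ∫ t in win, P t = 2 * arctan (δ / w) := by
    rw [hwin, ← intervalIntegral.integral_of_le (by linarith : u - δ ≤ u + δ)]
    exact FG_pk_window hw δ
  set A := ∫ t in win, P t with hAdef
  have hδw : 0 < δ / w := by positivity
  have hApos : 0 < A := by rw [hA]; have := FG_arctan_pos hδw; linarith
  have hAle : A ≤ Real.pi := by
    rw [hA]; have := Real.arctan_lt_pi_div_two (δ / w); linarith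
  have hπA : Real.pi - A ≤ 2 * w / δ := by
    rw [hA]
    have h1 := FG_pi_sub_arctan hδw
    rw [one_div, inv_div] at h1
    have h2 : 2 * w / δ = 2 * (w / δ) := by ring
    linarith
  -- split
  have hsplit : ∫ t in Ioi (0:ℝ), φ t * P t
      = (∫ t in win, φ t * P t) + ∫ t in Ioi 0 \ win, φ t * P t := by
    have := integral_diff (measurableSet_Ioc) hInt hwsub (f := fun t => φ t * P t) (μ := volume)
    linarith
  set e := 2 * (δ + |u - x|) with hedef
  have he0 : 0 ≤ e := by positivity
  set φx := x * Real.exp (-x) with hφx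
  have hφx0 : 0 ≤ φx := FG_phi_nonneg hx
  have hφx1 : φx ≤ 1 := FG_phi_le_one hx
  -- window integrand bounds
  have hwinbound : ∀ t ∈ win, |φ t - φx| ≤ e := by
    intro t ht
    have ht0 : 0 ≤ t := le_of_lt (hwsub ht)
    have h1 : |t - u| ≤ δ := by
      rw [abs_le]; constructor
      · linarith [ht.1]
      · linarith [ht.2]
    have h2 : |t - x| ≤ δ + |u - x| := by
      calc |t - x| = |(t - u) + (u - x)| := by ring_nf
        _ ≤ |t - u| + |u - x| := abs_add_le _ _
        _ ≤ δ + |u - x| := by linarith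
    calc |φ t - φx| ≤ 2 * |t - x| := FG_phi_lip ht0 hx
      _ ≤ e := by rw [hedef]; linarith
  -- window integral bounds
  have hIw_ub : ∫ t in win, φ t * P t ≤ (φx + e) * A := by
    rw [hAdef, ← integral_const_mul]
    refine setIntegral_mono_on (hInt.mono_set hwsub) ((hPK.integrableOn).const_mul _)
      measurableSet_Ioc (fun t ht => ?_)
    have := hwinbound t ht
    have h1 : φ t ≤ φx + e := by
      have := abs_le.1 this; linarith [this.2]
    exact mul_le_mul_of_nonneg_right h1 (hP0 t)
  have hIw_lb : (φx - e) * A ≤ ∫ t in win, φ t * P t := by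
    rw [hAdef, ← integral_const_mul]
    refine setIntegral_mono_on ((hPK.integrableOn).const_mul _) (hInt.mono_set hwsub)
      measurableSet_Ioc (fun t ht => ?_)
    have := hwinbound t ht
    have h1 : φx - e ≤ φ t := by
      have := abs_le.1 this; linarith [this.1]
    exact mul_le_mul_of_nonneg_right h1 (hP0 t)
  -- outside bounds
  have hmdiff : MeasurableSet (Ioi (0:ℝ) \ win) := measurableSet_Ioi.diff measurableSet_Ioc
  have hIo_lb : 0 ≤ ∫ t in Ioi 0 \ win, φ t * P t := by
    refine setIntegral_nonneg hmdiff (fun t ht => ?_)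
    exact mul_nonneg (FG_phi_nonneg (le_of_lt ht.1)) (hP0 t)
  have hIo_ub : ∫ t in Ioi 0 \ win, φ t * P t ≤ Real.pi - A := by
    have h1 : ∫ t in Ioi 0 \ win, φ t * P t ≤ ∫ t in Ioi 0 \ win, P t := by
      refine setIntegral_mono_on (hInt.mono_set diff_subset)
        (hPK.integrableOn.mono_set diff_subset) hmdiff (fun t ht => ?_)
      exact mul_le_of_le_one_left (hP0 t) (FG_phi_le_one (le_of_lt ht.1))
    have h2 : ∫ t in Ioi 0 \ win, P t ≤ ∫ t in univ \ win, P t := by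
      refine setIntegral_mono_set (hPK.integrableOn)
        (Eventually.of_forall fun t => hP0 t) ?_
      exact HasSubset.Subset.eventuallyLE (diff_subset_diff_left (subset_univ _))
    have h3 : ∫ t in univ \ win, P t = Real.pi - A := by
      have := integral_diff (measurableSet_Ioc) (hPK.integrableOn) (subset_univ win)
        (f := P) (μ := volume)
      rw [this, setIntegral_univ, FG_pk_integral_univ hw, hAdef]
    linarith
  -- assemble
  have hπA2 : Real.pi - A ≤ 2 * (w / δ) := by
    have : 2 * w / δ = 2 * (w / δ) := by ring
    linarith
  have hexp1 : (φx + e) * A = φx * A + e * A := by ring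
  have hexp2 : (φx - e) * A = φx * A - e * A := by ring
  have hfa : φx * A = φx * Real.pi - φx * (Real.pi - A) := by ring
  have hπe : Real.pi * e = 2 * Real.pi * (δ + |u - x|) := by rw [hedef]; ring
  have hwd : 4 * w / δ = 2 * (2 * (w / δ)) := by ring
  have h_eA : e * A ≤ Real.pi * e := by
    have := mul_le_mul_of_nonneg_left hAle he0
    nlinarith
  have h_eA0 : 0 ≤ e * A := mul_nonneg he0 (le_of_lt hApos)
  have h_fub : φx * (Real.pi - A) ≤ Real.pi - A := by
    nlinarith [mul_le_mul_of_nonneg_right hφx1 (sub_nonneg.2 hAle)]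
  have h_flb : 0 ≤ φx * (Real.pi - A) := mul_nonneg hφx0 (sub_nonneg.2 hAle)
  rw [hwF, hsplit, abs_le]
  constructor
  · linarith
  · linarith


lemma FG_wFint_le_pi {u w : ℝ} (hw : 0 < w) : w * Fint u w ≤ Real.pi := by
  have hPK : Integrable (fun t : ℝ => w / ((u - t)^2 + w^2)) := FG_pk_integrable hw
  rw [FG_wFint_eq hw]
  have h1 : ∫ t in Ioi (0:ℝ), (t * Real.exp (-t)) * (w / ((u - t)^2 + w^2))
      ≤ ∫ t in Ioi (0:ℝ), w / ((u - t)^2 + w^2) := by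
    refine setIntegral_mono_on (FG_phiP_integrableOn hw) (hPK.integrableOn)
      measurableSet_Ioi (fun t ht => ?_)
    have hP0 : 0 ≤ w / ((u - t)^2 + w^2) := by positivity
    exact mul_le_of_le_one_left hP0 (FG_phi_le_one (le_of_lt ht))
  have h2 : ∫ t in Ioi (0:ℝ), w / ((u - t)^2 + w^2) ≤ ∫ t : ℝ, w / ((u - t)^2 + w^2) :=
    setIntegral_le_integral hPK (Eventually.of_forall fun t => by positivity)
  rw [FG_pk_integral_univ hw] at h2
  linarith

lemma FG_Fint_integrableOn {u w : ℝ} (hw : 0 < w) :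
    IntegrableOn (fun t : ℝ => t * Real.exp (-t) / ((u - t)^2 + w^2)) (Ioi 0) := by
  refine (FG_integrableOn_phi.const_mul (1 / w^2)).mono' ?_ ?_
  · apply Continuous.aestronglyMeasurable
    apply Continuous.div (continuous_id.mul (Real.continuous_exp.comp continuous_neg))
    · continuity
    · intro t; positivity
  · filter_upwards [ae_restrict_mem measurableSet_Ioi] with t ht
    have ht0 : (0:ℝ) ≤ t := le_of_lt ht
    have hD : (0:ℝ) < (u - t)^2 + w^2 := by positivity
    have hD2 : w^2 ≤ (u - t)^2 + w^2 := by nlinarith [sq_nonneg (u - t)]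
    rw [Real.norm_eq_abs, abs_of_nonneg (by positivity)]
    rw [div_le_iff₀ hD]
    have h1 : 1 / w^2 * (t * Real.exp (-t)) * ((u - t)^2 + w^2)
        = (t * Real.exp (-t)) * (((u - t)^2 + w^2) / w^2) := by ring
    rw [h1]
    have h2 : (1:ℝ) ≤ ((u - t)^2 + w^2) / w^2 := by
      rw [le_div_iff₀ (by positivity)]; linarith
    nlinarith [FG_phi_nonneg ht0]

lemma FG_cauchy_integrable {u w : ℝ} (hw : 0 < w) :
    IntegrableOn (fun t : ℝ =>
      ((t * Real.exp (-t) : ℝ) : ℂ) / ((u : ℂ) + (w : ℝ) * Complex.I - (t : ℂ))) (Ioi 0) := by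
  refine (FG_integrableOn_phi.const_mul (1 / w)).mono' ?_ ?_
  · apply Continuous.aestronglyMeasurable
    apply Continuous.div
    · exact Complex.continuous_ofReal.comp
        (continuous_id.mul (Real.continuous_exp.comp continuous_neg))
    · continuity
    · intro t
      intro h
      have him : ((u : ℂ) + (w : ℝ) * Complex.I - (t : ℂ)).im = w := by simp
      rw [h] at him
      simp at him
      exact hw.ne' him.symm
  · filter_upwards [ae_restrict_mem measurableSet_Ioi] with t ht
    have ht0 : (0:ℝ) ≤ t := le_of_lt ht
    have him : ((u : ℂ) + (w : ℝ) * Complex.I - (t : ℂ)).im = w := by simp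
    have hnz : w ≤ ‖((u : ℂ) + (w : ℝ) * Complex.I - (t : ℂ))‖ := by
      calc w = |((u : ℂ) + (w : ℝ) * Complex.I - (t : ℂ)).im| := by
            rw [him, abs_of_pos hw]
        _ ≤ ‖((u : ℂ) + (w : ℝ) * Complex.I - (t : ℂ))‖ := Complex.abs_im_le_norm _
    rw [norm_div, Complex.norm_real, Real.norm_eq_abs,
      abs_of_nonneg (FG_phi_nonneg ht0)]
    rw [div_le_iff₀ (lt_of_lt_of_le hw hnz)]
    calc t * Real.exp (-t)
        = (1 / w * (t * Real.exp (-t))) * w := by field_simp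
      _ ≤ (1 / w * (t * Real.exp (-t))) * ‖((u : ℂ) + (w : ℝ) * Complex.I - (t : ℂ))‖ := by
          refine mul_le_mul_of_nonneg_left hnz ?_
          positivity

lemma FG_pointwise_G {u w l t : ℝ} (hl : 0 < l) (hD : 0 < (u - t)^2 + w^2)
    (h2 : (u - t)^2 ≤ (u - t)^2 + w^2) :
    |(u - t) / ((u - t)^2 + w^2)| ≤ l/2 + (1/(2*l)) * (1 / ((u - t)^2 + w^2)) := by
  set D := (u - t)^2 + w^2 with hDdef
  have h6 : |u - t| ≤ (l/2) * (u - t)^2 + 1/(2*l) := by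
    rw [← sub_nonneg]
    have e : (l/2) * (u - t)^2 + 1/(2*l) - |u - t| = (l * |u - t| - 1)^2 / (2*l) := by
      rw [show (l * |u - t| - 1)^2 = l^2*((u-t)^2) - 2*l*|u-t| + 1 from by
        rw [← sq_abs (u - t)]; ring]
      field_simp
      ring
    rw [e]; positivity
  have h7 : (u - t)^2 / D ≤ 1 := (div_le_one hD).2 h2
  rw [abs_div, abs_of_pos hD]
  calc |u - t| / D ≤ ((l/2) * (u - t)^2 + 1/(2*l)) / D := by gcongr
    _ = (l/2) * ((u - t)^2 / D) + (1/(2*l)) * (1/D) := by ring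
    _ ≤ l/2 + (1/(2*l)) * (1/D) := by
        have := mul_le_mul_of_nonneg_left h7 (le_of_lt (half_pos hl))
        linarith

lemma FG_H_re_eq {α u w : ℝ} (hw : 0 < w) :
    (Hfun α ((u : ℂ) + ((w : ℝ) : ℂ) * Complex.I)).re
      = u + α + α * ∫ t in Ioi (0:ℝ),
          (t * Real.exp (-t)) * ((u - t) / ((u - t)^2 + w^2)) := by
  rw [Hfun]
  have hint := FG_cauchy_integrable (u := u) hw
  have hre := integral_re hint
  simp only [RCLike.re_to_complex] at hre
  rw [Complex.add_re, Complex.add_re, Complex.mul_re]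
  rw [Complex.ofReal_re, Complex.ofReal_im]
  have h3 : ((u : ℂ) + ((w : ℝ) : ℂ) * Complex.I).re = u := by simp
  rw [h3]
  have h4 : (∫ t in Ioi (0:ℝ),
      ((t * Real.exp (-t) : ℝ) : ℂ) / ((u : ℂ) + (w : ℝ) * Complex.I - (t : ℂ))).re
      = ∫ t in Ioi (0:ℝ), (t * Real.exp (-t)) * ((u - t) / ((u - t)^2 + w^2)) := by
    rw [← hre]
    refine setIntegral_congr_fun measurableSet_Ioi (fun t _ => ?_)
    have hre2 : ((u : ℂ) + (w : ℝ) * Complex.I - (t : ℂ)).re = u - t := by simp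
    have him : ((u : ℂ) + (w : ℝ) * Complex.I - (t : ℂ)).im = w := by simp
    rw [Complex.div_re, hre2, him, Complex.normSq_apply, hre2, him]
    simp only [Complex.ofReal_re, Complex.ofReal_im]
    have hD : (0:ℝ) < (u - t)^2 + w^2 := by positivity
    have hsq : (u - t) * (u - t) + w * w = (u - t)^2 + w^2 := by ring
    rw [hsq]
    ring
  rw [h4]
  ring

lemma FG_H_re_neg {α r : ℝ} (hr : r < 0) (hα : 0 ≤ α) :
    (Hfun α ((r : ℂ) + ((0 : ℝ) : ℂ) * Complex.I)).re ≤ r + α := by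
  rw [Hfun]
  have hz : (r : ℂ) + ((0 : ℝ) : ℂ) * Complex.I = (r : ℂ) := by simp
  rw [hz]
  set g : ℝ → ℂ := fun t => ((t * Real.exp (-t) : ℝ) : ℂ) / ((r : ℂ) - (t : ℂ)) with hgdef
  have hren : ∀ t : ℝ, 0 < t → (g t).re ≤ 0 := by
    intro t ht
    have hre2 : ((r : ℂ) - (t : ℂ)).re = r - t := by simp
    have him : ((r : ℂ) - (t : ℂ)).im = 0 := by simp
    rw [hgdef]
    simp only
    rw [Complex.div_re, hre2, him, Complex.normSq_apply, hre2, him]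
    simp only [Complex.ofReal_re, Complex.ofReal_im]
    have hrt : r - t < 0 := by linarith
    rcases eq_or_lt_of_le (sq_nonneg (r - t)) with h | h
    · have : r - t = 0 := by nlinarith
      rw [this]; simp
    · have hD : 0 < (r - t) * (r - t) + 0 * 0 := by nlinarith
      have hnum : t * Real.exp (-t) * (r - t) ≤ 0 :=
        mul_nonpos_of_nonneg_of_nonpos (FG_phi_nonneg (le_of_lt ht)) (le_of_lt hrt)
      have : t * Real.exp (-t) * (r - t) / ((r - t) * (r - t) + 0 * 0) ≤ 0 :=
        div_nonpos_of_nonpos_of_nonneg hnum (le_of_lt hD)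
      simpa using this
  have hJ : (∫ t in Ioi (0:ℝ), g t).re ≤ 0 := by
    by_cases hI : IntegrableOn g (Ioi 0)
    · have hre := integral_re hI
      simp only [RCLike.re_to_complex] at hre
      rw [← hre]
      refine integral_nonpos_of_ae ?_
      filter_upwards [ae_restrict_mem measurableSet_Ioi] with t ht
      exact hren t ht
    · rw [integral_undef hI]
      simp
  have hα2 : ((α : ℂ)).re = α := Complex.ofReal_re α
  rw [Complex.add_re, Complex.add_re, Complex.mul_re, Complex.ofReal_re, Complex.ofReal_im,
    Complex.ofReal_re]
  nlinarith

lemma FG_G_bound {u w l : ℝ} (hw : 0 < w) (hl : 0 < l) :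
    |∫ t in Ioi (0:ℝ), (t * Real.exp (-t)) * ((u - t) / ((u - t)^2 + w^2))|
      ≤ l / 2 + (1 / (2 * l)) * Fint u w := by
  have hFi := FG_Fint_integrableOn (u := u) hw
  have hbound : IntegrableOn (fun t : ℝ =>
      (l/2) * (t * Real.exp (-t)) + (1/(2*l)) * (t * Real.exp (-t) / ((u - t)^2 + w^2)))
      (Ioi 0) := (FG_integrableOn_phi.const_mul (l/2)).add (hFi.const_mul (1/(2*l)))
  have hptwise : ∀ t : ℝ, 0 < t →
      |(t * Real.exp (-t)) * ((u - t) / ((u - t)^2 + w^2))|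
        ≤ (l/2) * (t * Real.exp (-t)) + (1/(2*l)) * (t * Real.exp (-t) / ((u - t)^2 + w^2)) := by
    intro t ht
    have ht0 : (0:ℝ) ≤ t := le_of_lt ht
    have hD : (0:ℝ) < (u - t)^2 + w^2 := by positivity
    have h2 : (u - t)^2 ≤ (u - t)^2 + w^2 := by nlinarith [sq_nonneg w]
    have hφ0 := FG_phi_nonneg ht0
    rw [abs_mul, abs_of_nonneg hφ0]
    calc t * Real.exp (-t) * |(u - t) / ((u - t)^2 + w^2)|
        ≤ (t * Real.exp (-t)) * (l/2 + (1/(2*l)) * (1 / ((u - t)^2 + w^2))) :=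
          mul_le_mul_of_nonneg_left (FG_pointwise_G hl hD h2) hφ0
      _ = (l/2) * (t * Real.exp (-t)) + (1/(2*l)) * (t * Real.exp (-t) / ((u - t)^2 + w^2)) := by
          ring
  have hGi : IntegrableOn (fun t : ℝ =>
      (t * Real.exp (-t)) * ((u - t) / ((u - t)^2 + w^2))) (Ioi 0) := by
    refine hbound.mono' ?_ ?_
    · apply Continuous.aestronglyMeasurable
      apply Continuous.mul (continuous_id.mul (Real.continuous_exp.comp continuous_neg))
      apply Continuous.div (by continuity) (by continuity)
      intro t; positivity
    · filter_upwards [ae_restrict_mem measurableSet_Ioi] with t ht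
      rw [Real.norm_eq_abs]
      exact hptwise t ht
  have habs : |∫ t in Ioi (0:ℝ), (t * Real.exp (-t)) * ((u - t) / ((u - t)^2 + w^2))|
      ≤ ∫ t in Ioi (0:ℝ), |(t * Real.exp (-t)) * ((u - t) / ((u - t)^2 + w^2))| := by
    have := norm_integral_le_integral_norm (μ := volume.restrict (Ioi 0))
      (f := fun t : ℝ => (t * Real.exp (-t)) * ((u - t) / ((u - t)^2 + w^2)))
    simpa only [Real.norm_eq_abs] using this
  have hmono : ∫ t in Ioi (0:ℝ), |(t * Real.exp (-t)) * ((u - t) / ((u - t)^2 + w^2))|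
      ≤ ∫ t in Ioi (0:ℝ),
        ((l/2) * (t * Real.exp (-t)) + (1/(2*l)) * (t * Real.exp (-t) / ((u - t)^2 + w^2))) :=
    setIntegral_mono_on hGi.abs hbound measurableSet_Ioi (fun t ht => hptwise t ht)
  have hsplit : ∫ t in Ioi (0:ℝ),
      ((l/2) * (t * Real.exp (-t)) + (1/(2*l)) * (t * Real.exp (-t) / ((u - t)^2 + w^2)))
      = (l/2) * (∫ t in Ioi (0:ℝ), t * Real.exp (-t))
        + (1/(2*l)) * ∫ t in Ioi (0:ℝ), t * Real.exp (-t) / ((u - t)^2 + w^2) := by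
    rw [integral_add (FG_integrableOn_phi.const_mul (l/2)) (hFi.const_mul (1/(2*l))),
      integral_const_mul, integral_const_mul]
  rw [hsplit, FG_integral_phi] at hmono
  have hFint : Fint u w = ∫ t in Ioi (0:ℝ), t * Real.exp (-t) / ((u - t)^2 + w^2) := rfl
  rw [hFint]
  calc |∫ t in Ioi (0:ℝ), (t * Real.exp (-t)) * ((u - t) / ((u - t)^2 + w^2))|
      ≤ ∫ t in Ioi (0:ℝ), |(t * Real.exp (-t)) * ((u - t) / ((u - t)^2 + w^2))| := habs
    _ ≤ (l/2) * 1 + (1/(2*l)) * ∫ t in Ioi (0:ℝ), t * Real.exp (-t) / ((u - t)^2 + w^2) := hmono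
    _ = l / 2 + (1 / (2 * l)) * ∫ t in Ioi (0:ℝ), t * Real.exp (-t) / ((u - t)^2 + w^2) := by
        ring

/-- for each `x > 0`, `lim_{α ↓ 0} f_α(x)/α = x⁻¹ e^{-x}`. -/
theorem free_gamma_density_small_alpha_limit
    (c : ℝ → ℝ) (v : ℝ → ℝ → ℝ) (P : ℝ → ℝ → ℝ) (Pinv : ℝ → ℝ → ℝ)
    (s : ℝ → ℝ) (f : ℝ → ℝ → ℝ)
    (hc : ∀ α : ℝ, 0 < α → 0 < c α ∧
      (∫ t in Set.Ioi (0:ℝ), t * Real.exp (-t) / (c α + t)^2) = 1/α)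
    (hv0 : ∀ α : ℝ, 0 < α → ∀ x ≤ -(c α), v α x = 0)
    (hvpos : ∀ α : ℝ, 0 < α → ∀ x, -(c α) < x → 0 < v α x)
    (hveq : ∀ α : ℝ, 0 < α → ∀ x, -(c α) < x → Fint x (v α x) = 1/α)
    (hvuniq : ∀ α : ℝ, 0 < α → ∀ x, -(c α) < x →
      ∀ y, 0 < y → Fint x y = 1/α → y = v α x)
    (hP : ∀ α : ℝ, 0 < α → ∀ x : ℝ,
      ((P α x : ℝ) : ℂ) = Hfun α ((x : ℂ) + (v α x : ℝ) * Complex.I))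
    (hPinv₁ : ∀ α : ℝ, 0 < α → Function.LeftInverse (Pinv α) (P α))
    (hPinv₂ : ∀ α : ℝ, 0 < α → Function.RightInverse (Pinv α) (P α))
    (hs : ∀ α : ℝ, 0 < α → s α = P α (-(c α)))
    (hf0 : ∀ α : ℝ, 0 < α → ∀ ξ ≤ s α, f α ξ = 0)
    (hf1 : ∀ α : ℝ, 0 < α → ∀ ξ, s α < ξ → f α ξ =
      (1 / Real.pi) * (v α (Pinv α ξ) / ((Pinv α ξ)^2 + (v α (Pinv α ξ))^2))) :
    ∀ x : ℝ, 0 < x →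
      Filter.Tendsto (fun α => f α x / α) (nhdsWithin 0 (Set.Ioi 0))
        (nhds (x⁻¹ * Real.exp (-x))) := by
  intro x hx
  have hπ := Real.pi_pos
  have hIoo : Ioo (0:ℝ) x ∈ nhdsWithin (0:ℝ) (Set.Ioi 0) :=
    Ioo_mem_nhdsGT_of_mem ⟨le_refl 0, hx⟩
  -- per-α key facts
  have key : ∀ α : ℝ, α ∈ Ioo (0:ℝ) x →
      0 < v α (Pinv α x) ∧ v α (Pinv α x) ≤ Real.pi * α ∧
      |Pinv α x - x| ≤ α + Real.sqrt α ∧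
      Fint (Pinv α x) (v α (Pinv α x)) = 1/α ∧
      f α x = (1 / Real.pi) *
        (v α (Pinv α x) / ((Pinv α x)^2 + (v α (Pinv α x))^2)) := by
    intro α hα
    obtain ⟨hα0, hαx⟩ := hα
    have hcα := (hc α hα0).1
    have hPu : P α (Pinv α x) = x := hPinv₂ α hα0 x
    have hA : -(c α) < Pinv α x := by
      by_contra hcon
      push_neg at hcon
      have hv0' : v α (Pinv α x) = 0 := hv0 α hα0 (Pinv α x) hcon
      have hu_neg : Pinv α x < 0 := lt_of_le_of_lt hcon (by linarith)
      have hHre := FG_H_re_neg (α := α) (r := Pinv α x) hu_neg hα0.le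
      have heq := hP α hα0 (Pinv α x)
      rw [hPu, hv0'] at heq
      have hre : x = (Hfun α (((Pinv α x) : ℂ) + ((0:ℝ) : ℂ) * Complex.I)).re := by
        rw [← heq, Complex.ofReal_re]
      rw [← hre] at hHre
      linarith
    have hwpos : 0 < v α (Pinv α x) := hvpos α hα0 (Pinv α x) hA
    have hFeq : Fint (Pinv α x) (v α (Pinv α x)) = 1/α := hveq α hα0 (Pinv α x) hA
    have hwle : v α (Pinv α x) ≤ Real.pi * α := by
      have h1 := FG_wFint_le_pi (u := Pinv α x) hwpos
      rw [hFeq] at h1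
      have h2 : v α (Pinv α x) = (v α (Pinv α x) * (1/α)) * α := by field_simp
      rw [h2]
      exact mul_le_mul_of_nonneg_right h1 hα0.le
    -- closeness of u to x
    have hclose : |Pinv α x - x| ≤ α + Real.sqrt α := by
      set r := Real.sqrt α with hrdef
      have hr : 0 < r := Real.sqrt_pos.2 hα0
      have hrr : r * r = α := Real.mul_self_sqrt hα0.le
      have hre := hP α hα0 (Pinv α x)
      rw [hPu] at hre
      have hHre := FG_H_re_eq (α := α) (u := Pinv α x) (w := v α (Pinv α x)) hwpos
      have hxeq : x = Pinv α x + α + α * ∫ t in Ioi (0:ℝ),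
          (t * Real.exp (-t)) *
            ((Pinv α x - t) / ((Pinv α x - t)^2 + (v α (Pinv α x))^2)) := by
        have h5 : x = (Hfun α (((Pinv α x) : ℂ) +
            ((v α (Pinv α x) : ℝ) : ℂ) * Complex.I)).re := by
          rw [← hre, Complex.ofReal_re]
        rw [hHre] at h5
        exact h5
      have hGb := FG_G_bound (u := Pinv α x) (w := v α (Pinv α x)) hwpos
        (l := r⁻¹) (inv_pos.2 hr)
      rw [hFeq] at hGb
      have e : α * (r⁻¹/2 + (1/(2*r⁻¹)) * (1/α)) = r := by
        rw [← hrr]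
        field_simp
        ring
      have hGb2 : α * |∫ t in Ioi (0:ℝ),
          (t * Real.exp (-t)) *
            ((Pinv α x - t) / ((Pinv α x - t)^2 + (v α (Pinv α x))^2))| ≤ r := by
        calc α * |∫ t in Ioi (0:ℝ), (t * Real.exp (-t)) *
              ((Pinv α x - t) / ((Pinv α x - t)^2 + (v α (Pinv α x))^2))|
            ≤ α * (r⁻¹/2 + (1/(2*r⁻¹)) * (1/α)) :=
              mul_le_mul_of_nonneg_left hGb hα0.le
          _ = r := e
      rw [abs_sub_comm]
      have h6 : x - Pinv α x = α + α * ∫ t in Ioi (0:ℝ),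
          (t * Real.exp (-t)) *
            ((Pinv α x - t) / ((Pinv α x - t)^2 + (v α (Pinv α x))^2)) := by
        linarith
      rw [h6]
      calc |α + α * ∫ t in Ioi (0:ℝ), (t * Real.exp (-t)) *
            ((Pinv α x - t) / ((Pinv α x - t)^2 + (v α (Pinv α x))^2))|
          ≤ |α| + |α * ∫ t in Ioi (0:ℝ), (t * Real.exp (-t)) *
            ((Pinv α x - t) / ((Pinv α x - t)^2 + (v α (Pinv α x))^2))| := abs_add_le _ _
        _ = α + α * |∫ t in Ioi (0:ℝ), (t * Real.exp (-t)) *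
            ((Pinv α x - t) / ((Pinv α x - t)^2 + (v α (Pinv α x))^2))| := by
            rw [abs_of_pos hα0, abs_mul, abs_of_pos hα0]
        _ ≤ α + r := by linarith
    -- s α < x
    have hsαx : s α < x := by
      have hvc : v α (-(c α)) = 0 := hv0 α hα0 (-(c α)) (le_refl _)
      have hPc := hP α hα0 (-(c α))
      rw [hvc] at hPc
      have hHc := FG_H_re_neg (α := α) (r := -(c α)) (by linarith) hα0.le
      have h7 : P α (-(c α))
          = (Hfun α (((-(c α) : ℝ) : ℂ) + ((0:ℝ) : ℂ) * Complex.I)).re := by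
        rw [← hPc, Complex.ofReal_re]
      have h8 : s α ≤ -(c α) + α := by
        rw [hs α hα0, h7]
        exact_mod_cast hHc
      linarith
    exact ⟨hwpos, hwle, hclose, hFeq, hf1 α hα0 x hsαx⟩
  -- T1 : u → x
  have hT1 : Tendsto (fun α => Pinv α x) (nhdsWithin 0 (Set.Ioi 0)) (nhds x) := by
    rw [tendsto_iff_dist_tendsto_zero]
    refine squeeze_zero' (g := fun α => α + Real.sqrt α) ?_ ?_ ?_
    · filter_upwards with α using dist_nonneg
    · filter_upwards [hIoo] with α hα
      rw [Real.dist_eq]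
      exact (key α hα).2.2.1
    · have hcont : Continuous (fun α : ℝ => α + Real.sqrt α) :=
        continuous_id.add Real.continuous_sqrt
      have h1 := (hcont.tendsto 0).mono_left
        (nhdsWithin_le_nhds : nhdsWithin (0:ℝ) (Set.Ioi 0) ≤ nhds 0)
      simpa using h1
  -- T2 : w → 0
  have hT2 : Tendsto (fun α => v α (Pinv α x)) (nhdsWithin 0 (Set.Ioi 0)) (nhds 0) := by
    refine squeeze_zero' (g := fun α => Real.pi * α) ?_ ?_ ?_
    · filter_upwards [hIoo] with α hα
      exact (key α hα).1.le
    · filter_upwards [hIoo] with α hα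
      exact (key α hα).2.1
    · have hcont : Continuous (fun α : ℝ => Real.pi * α) := continuous_const.mul continuous_id
      have h1 := (hcont.tendsto 0).mono_left
        (nhdsWithin_le_nhds : nhdsWithin (0:ℝ) (Set.Ioi 0) ≤ nhds 0)
      simpa using h1
  -- T3 : w * Fint u w → π x e^{-x}
  have hT3 : Tendsto (fun α => v α (Pinv α x) * Fint (Pinv α x) (v α (Pinv α x)))
      (nhdsWithin 0 (Set.Ioi 0)) (nhds (Real.pi * (x * Real.exp (-x)))) := by
    rw [Metric.tendsto_nhds]
    intro ε hε
    set δ0 := min (x/2) (ε / (16 * Real.pi)) with hδ0def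
    have hδ0pos : 0 < δ0 := lt_min (by linarith) (by positivity)
    have hδ0x : δ0 ≤ x/2 := min_le_left _ _
    have hδ0ε : 2 * Real.pi * δ0 ≤ ε/4 := by
      have h1 : δ0 ≤ ε / (16 * Real.pi) := min_le_right _ _
      have h2 : 2 * Real.pi * δ0 ≤ 2 * Real.pi * (ε / (16 * Real.pi)) := by
        apply mul_le_mul_of_nonneg_left h1 (by positivity)
      have h3 : 2 * Real.pi * (ε / (16 * Real.pi)) = ε / 8 := by
        field_simp
        ring
      rw [h3] at h2
      linarith
    have hη : (0:ℝ) < min (x/2) (ε / (16 * Real.pi + 1)) := by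
      apply lt_min (by linarith)
      positivity
    have hev_u := (Metric.tendsto_nhds.1 hT1) _ hη
    have hwsmall : (0:ℝ) < ε * δ0 / 16 := by positivity
    have hev_w := (Metric.tendsto_nhds.1 hT2) _ hwsmall
    filter_upwards [hIoo, hev_u, hev_w] with α hα hu hw
    obtain ⟨hwpos, _, _, hFeq, _⟩ := key α hα
    rw [Real.dist_eq] at hu hw ⊢
    have hux : |Pinv α x - x| < min (x/2) (ε / (16 * Real.pi + 1)) := by
      simpa using hu
    have hux1 : |Pinv α x - x| < x/2 := lt_of_lt_of_le hux (min_le_left _ _)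
    have hux2 : |Pinv α x - x| < ε / (16 * Real.pi + 1) :=
      lt_of_lt_of_le hux (min_le_right _ _)
    have huxb : 2 * Real.pi * |Pinv α x - x| ≤ ε/4 := by
      have h1 : 2 * Real.pi * |Pinv α x - x| ≤ 2 * Real.pi * (ε / (16 * Real.pi + 1)) :=
        mul_le_mul_of_nonneg_left hux2.le (by positivity)
      have h2 : 2 * Real.pi * (ε / (16 * Real.pi + 1)) ≤ ε/4 := by
        rw [mul_div_assoc']
        rw [div_le_div_iff₀ (by positivity) (by norm_num : (0:ℝ) < 4)]
        nlinarith [hε.le, hπ.le]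
      linarith
    have hwb : |v α (Pinv α x)| < ε * δ0 / 16 := by simpa using hw
    have hwb2 : v α (Pinv α x) < ε * δ0 / 16 := by
      rw [abs_of_pos hwpos] at hwb; exact hwb
    have hδu : δ0 ≤ Pinv α x := by
      have := abs_lt.1 hux1
      linarith [this.1]
    have hKb := FG_K_bound (u := Pinv α x) (w := v α (Pinv α x)) (δ := δ0) (x := x)
      hwpos hδ0pos hδu hx.le
    have hwδ : 4 * v α (Pinv α x) / δ0 < ε/4 := by
      rw [div_lt_iff₀ hδ0pos]
      nlinarith
    calc |v α (Pinv α x) * Fint (Pinv α x) (v α (Pinv α x))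
        - Real.pi * (x * Real.exp (-x))|
        ≤ 2 * Real.pi * (δ0 + |Pinv α x - x|) + 4 * v α (Pinv α x) / δ0 := hKb
      _ < ε/4 + ε/4 + ε/4 := by
          have : 2 * Real.pi * (δ0 + |Pinv α x - x|)
              = 2 * Real.pi * δ0 + 2 * Real.pi * |Pinv α x - x| := by ring
          rw [this]
          linarith
      _ < ε := by linarith
  -- T4 : u² + w² → x²
  have hT4 : Tendsto (fun α => (Pinv α x)^2 + (v α (Pinv α x))^2)
      (nhdsWithin 0 (Set.Ioi 0)) (nhds (x^2)) := by
    have h1 := (hT1.pow 2).add (hT2.pow 2)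
    simpa using h1
  -- assemble
  have hx2 : (x:ℝ)^2 ≠ 0 := by positivity
  have hT5 : Tendsto (fun α => (1/Real.pi) *
      (v α (Pinv α x) * Fint (Pinv α x) (v α (Pinv α x)))
        / ((Pinv α x)^2 + (v α (Pinv α x))^2))
      (nhdsWithin 0 (Set.Ioi 0))
      (nhds ((1/Real.pi) * (Real.pi * (x * Real.exp (-x))) / (x^2))) :=
    (Tendsto.const_mul _ hT3).div hT4 hx2
  have hval : (1/Real.pi) * (Real.pi * (x * Real.exp (-x))) / (x^2)
      = x⁻¹ * Real.exp (-x) := by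
    field_simp
  rw [hval] at hT5
  refine hT5.congr' ?_
  filter_upwards [hIoo] with α hα
  obtain ⟨hwpos, _, _, hFeq, hfx⟩ := key α hα
  have hα0 : 0 < α := hα.1
  have hD : (0:ℝ) < (Pinv α x)^2 + (v α (Pinv α x))^2 := by positivity
  rw [hfx, hFeq]
  field_simp
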